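/- Let A be a continuous k×k matrix-valued function on a compact subset K of ℝⁿ, and let α be a real number such that every eigenvalue λ of A(x), for every x in K, satisfies Re λ > α. Then there exists a constant C > 0 such that ‖t^{A(x)}‖ ≤ C t^α for all x ∈ K and all sufficiently small t > 0. -/

import Mathlib

open Set

attribute [local instance]
  Matrix.linftyOpNormedAddCommGroup Matrix.linftyOpNormedRing Matrix.linftyOpNormedAlgebra

open scoped Topology
open Filter NormedSpace

lemma aux_exp_mulVec_eigen {k : ℕ} (M : Matrix (Fin k) (Fin k) ℂ) (v : Fin k → ℂ) (c : ℂ)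
    (h : M.mulVec v = c • v) :
    (NormedSpace.exp M).mulVec v = Complex.exp c • v := by
  classical
  let L : Matrix (Fin k) (Fin k) ℂ →ₗ[ℂ] (Fin k → ℂ) :=
    { toFun := fun N => N.mulVec v
      map_add' := fun N₁ N₂ => Matrix.add_mulVec _ _ _
      map_smul' := fun r N => Matrix.smul_mulVec r N v }
  let L' : Matrix (Fin k) (Fin k) ℂ →L[ℂ] (Fin k → ℂ) := ⟨L, L.continuous_of_finiteDimensional⟩
  have hpow : ∀ m : ℕ, (M ^ m).mulVec v = c ^ m • v := by
    intro m
    induction m with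
    | zero => simp [Matrix.one_mulVec]
    | succ m ih =>
        rw [pow_succ, ← Matrix.mulVec_mulVec, h, Matrix.mulVec_smul, ih, smul_smul, ← pow_succ']
  have hsum : Summable fun m : ℕ => (Nat.factorial m : ℂ)⁻¹ • M ^ m := expSeries_summable' (𝕂 := ℂ) M
  have h1 : (NormedSpace.exp M).mulVec v = L' (NormedSpace.exp M) := rfl
  rw [h1, NormedSpace.exp_eq_tsum ℂ, L'.map_tsum hsum]
  have h2 : ∀ m : ℕ, L' ((Nat.factorial m : ℂ)⁻¹ • M ^ m) = ((Nat.factorial m : ℂ)⁻¹ * c ^ m) • v := by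
    intro m
    have : L' (M ^ m) = c ^ m • v := hpow m
    rw [map_smul, this, smul_smul]
  simp_rw [h2, ← smul_eq_mul]
  rw [Summable.tsum_smul_const (expSeries_summable' (𝕂 := ℂ) c), Complex.exp_eq_exp_ℂ,
    NormedSpace.exp_eq_tsum ℂ]

lemma aux_spectrum_exp_neg {k : ℕ} (B : Matrix (Fin k) (Fin k) ℂ)
    (hB : ∀ lam ∈ spectrum ℂ B, 0 < lam.re) :
    ∀ μ ∈ spectrum ℂ (NormedSpace.exp (-B)), ‖μ‖₊ < 1 := by
  intro μ hμ
  classical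
  set e := Matrix.toLinAlgEquiv' (R := ℂ) (n := Fin k) with he
  have hμ' : μ ∈ spectrum ℂ (e (NormedSpace.exp (-B))) := by
    rwa [AlgEquiv.spectrum_eq]
  have hev : Module.End.HasEigenvalue (e (NormedSpace.exp (-B))) μ :=
    Module.End.hasEigenvalue_iff_mem_spectrum.mpr hμ'
  haveI : Nontrivial (Module.End.eigenspace (e (NormedSpace.exp (-B))) μ) := Submodule.nontrivial_iff_ne_bot.mpr hev
  have hcomm : NormedSpace.exp (-B) * B = B * NormedSpace.exp (-B) :=
    ((Commute.refl B).neg_left.exp_left).eq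
  have hmaps : ∀ x ∈ Module.End.eigenspace (e (NormedSpace.exp (-B))) μ,
      e B x ∈ Module.End.eigenspace (e (NormedSpace.exp (-B))) μ := by
    intro x hx
    rw [Module.End.mem_eigenspace_iff] at hx ⊢
    have : e (NormedSpace.exp (-B)) (e B x) = e B (e (NormedSpace.exp (-B)) x) := by
      rw [← Module.End.mul_apply, ← Module.End.mul_apply, ← map_mul, ← map_mul, hcomm]
    rw [this, hx, map_smul]
  obtain ⟨lam, hlam⟩ := Module.End.exists_eigenvalue ((e B).restrict hmaps)
  obtain ⟨w, hw⟩ := hlam.exists_hasEigenvector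
  have hw0 : (w : Fin k → ℂ) ≠ 0 := fun hh => hw.2 (Subtype.ext hh)
  have heig : e B (w : Fin k → ℂ) = lam • (w : Fin k → ℂ) := by
    have := hw.apply_eq_smul
    have := congrArg (Subtype.val) this
    rwa [LinearMap.restrict_apply] at this
  have hBmul : B.mulVec (w : Fin k → ℂ) = lam • (w : Fin k → ℂ) := by
    rwa [Matrix.toLinAlgEquiv'_apply] at heig
  have hlamspec : lam ∈ spectrum ℂ B := by
    rw [← AlgEquiv.spectrum_eq e B, ← Module.End.hasEigenvalue_iff_mem_spectrum]
    exact Module.End.hasEigenvalue_of_hasEigenvector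
      ⟨Module.End.mem_eigenspace_iff.mpr heig, hw0⟩
  have hre : 0 < lam.re := hB lam hlamspec
  have hexp : (NormedSpace.exp (-B)).mulVec (w : Fin k → ℂ)
      = Complex.exp (-lam) • (w : Fin k → ℂ) := by
    refine aux_exp_mulVec_eigen (-B) _ (-lam) ?_
    rw [Matrix.neg_mulVec, hBmul, neg_smul]
  have hμw : (NormedSpace.exp (-B)).mulVec (w : Fin k → ℂ) = μ • (w : Fin k → ℂ) := by
    have := Module.End.mem_eigenspace_iff.mp w.2
    rwa [Matrix.toLinAlgEquiv'_apply] at this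
  have hμeq : μ = Complex.exp (-lam) := smul_left_injective ℂ hw0 (hμw.symm.trans hexp)
  have : ‖μ‖ < 1 := by
    rw [hμeq, Complex.norm_exp]
    rw [Real.exp_lt_one_iff, Complex.neg_re]
    linarith
  exact_mod_cast this

lemma aux_exists_pow_norm_lt_one {k : ℕ} (hk : 0 < k) (E : Matrix (Fin k) (Fin k) ℂ)
    (hE : ∀ μ ∈ spectrum ℂ E, ‖μ‖₊ < 1) : ∃ m : ℕ, 0 < m ∧ ‖E ^ m‖ < 1 := by
  haveI : Nonempty (Fin k) := ⟨⟨0, hk⟩⟩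
  haveI : Nontrivial (Matrix (Fin k) (Fin k) ℂ) := by
    refine ⟨1, 0, fun h => ?_⟩
    have := congrFun (congrFun h ⟨0, hk⟩) ⟨0, hk⟩
    simp [Matrix.one_apply] at this
  have hρ : spectralRadius ℂ E < (1 : NNReal) :=
    spectrum.spectralRadius_lt_of_forall_lt_of_nonempty (spectrum.nonempty E) hE
  have hρ' : spectralRadius ℂ E < 1 := by simpa using hρ
  have htend := spectrum.pow_nnnorm_pow_one_div_tendsto_nhds_spectralRadius E
  have hev : ∀ᶠ m : ℕ in atTop, ((‖E ^ m‖₊ : ENNReal)) ^ (1 / (m : ℝ)) < 1 :=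
    htend.eventually_lt_const hρ'
  obtain ⟨m, hlt, hm1⟩ := (hev.and (eventually_ge_atTop 1)).exists
  have hnn : ‖E ^ m‖₊ < 1 := by
    by_contra hcon
    push_neg at hcon
    have h1 : (1 : ENNReal) ≤ ((‖E ^ m‖₊ : ENNReal)) ^ (1 / (m : ℝ)) := by
      calc (1 : ENNReal) = (1 : ENNReal) ^ (1 / (m : ℝ)) := (ENNReal.one_rpow _).symm
        _ ≤ _ := ENNReal.rpow_le_rpow (by exact_mod_cast hcon) (by positivity)
    exact absurd hlt (not_lt_of_ge h1)
  exact ⟨m, hm1, by exact_mod_cast hnn⟩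

lemma aux_norm_map {k : ℕ} (M : Matrix (Fin k) (Fin k) ℝ) :
    ‖M.map (algebraMap ℝ ℂ)‖ = ‖M‖ := by
  rw [Matrix.linfty_opNorm_def, Matrix.linfty_opNorm_def]
  norm_cast
  congr 1
  funext i
  congr 1
  funext j
  simp [Matrix.map_apply]

lemma aux_map_exp {k : ℕ} (M : Matrix (Fin k) (Fin k) ℝ) :
    (NormedSpace.exp M).map (algebraMap ℝ ℂ) = NormedSpace.exp (M.map (algebraMap ℝ ℂ)) := by
  have hc : Continuous ((algebraMap ℝ ℂ).mapMatrix :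
      Matrix (Fin k) (Fin k) ℝ →+* Matrix (Fin k) (Fin k) ℂ) := by
    exact
      (continuous_id : Continuous fun N : Matrix (Fin k) (Fin k) ℝ => N).matrix_map (continuous_algebraMap ℝ ℂ)
  have h := map_exp ((algebraMap ℝ ℂ).mapMatrix :
      Matrix (Fin k) (Fin k) ℝ →+* Matrix (Fin k) (Fin k) ℂ) hc M
  rw [RingHom.mapMatrix_apply] at h
  erw [h]
  rfl

lemma aux_exp_shift {k : ℕ} (M : Matrix (Fin k) (Fin k) ℂ) (z c : ℂ) :
    NormedSpace.exp (z • M)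
      = Complex.exp (z * c) •
        NormedSpace.exp (z • (M - algebraMap ℂ (Matrix (Fin k) (Fin k) ℂ) c)) := by
  have h1 : z • algebraMap ℂ (Matrix (Fin k) (Fin k) ℂ) c
      = algebraMap ℂ (Matrix (Fin k) (Fin k) ℂ) (z * c) := by
    rw [Algebra.smul_def, ← map_mul]
  have h2 : z • M = z • (M - algebraMap ℂ (Matrix (Fin k) (Fin k) ℂ) c)
      + algebraMap ℂ (Matrix (Fin k) (Fin k) ℂ) (z * c) := by
    rw [smul_sub, h1, sub_add_cancel]
  erw [h2, NormedSpace.exp_add_of_commute (Algebra.commute_algebraMap_right _ _),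
    ← algebraMap_exp_comm, ← Complex.exp_eq_exp_ℂ,
    Algebra.algebraMap_eq_smul_one (Complex.exp (z * c)), mul_smul_comm, mul_one]
  rfl

/-- If `A` is a continuous matrix-valued function on a compact set `K ⊆ ℝⁿ` all of whose
eigenvalues have real part `> α`, then `‖t^{A(x)}‖ ≤ C t^α` uniformly on `K` for small
`t > 0`, where `t^M = exp((log t) M)`. -/
theorem matrix_power_uniform_estimate {n k : ℕ} (K : Set (Fin n → ℝ)) (hK : IsCompact K)
    (A : (Fin n → ℝ) → Matrix (Fin k) (Fin k) ℝ) (hA : ContinuousOn A K) (α : ℝ)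
    (hspec : ∀ x ∈ K, ∀ lam ∈ spectrum ℂ ((A x).map (algebraMap ℝ ℂ)), α < lam.re) :
    ∃ C > (0 : ℝ), ∃ t₁ > (0 : ℝ), ∀ x ∈ K, ∀ t : ℝ, 0 < t → t < t₁ →
      ‖NormedSpace.exp (Real.log t • A x)‖ ≤ C * t ^ α := by
  classical
  rcases K.eq_empty_or_nonempty with hKe | hKne
  · exact ⟨1, one_pos, 1, one_pos, by simp [hKe]⟩
  rcases Nat.eq_zero_or_pos k with hk0 | hk
  · subst hk0
    refine ⟨1, one_pos, 1, one_pos, fun x hx t ht ht1 => ?_⟩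
    have h0 : NormedSpace.exp (Real.log t • A x) = 0 := Subsingleton.elim _ _
    rw [h0, norm_zero, one_mul]
    positivity
  haveI : Nonempty (Fin k) := ⟨⟨0, hk⟩⟩
  haveI : CompactSpace K := isCompact_iff_compactSpace.mp hK
  set Bc : (Fin n → ℝ) → Matrix (Fin k) (Fin k) ℂ := fun x =>
    (A x).map (algebraMap ℝ ℂ) - algebraMap ℂ (Matrix (Fin k) (Fin k) ℂ) (α : ℂ) with hBc
  have hspecB : ∀ x ∈ K, ∀ lam ∈ spectrum ℂ (Bc x), 0 < lam.re := by
    intro x hx lam hlam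
    simp only [hBc] at hlam
    rw [← spectrum.sub_singleton_eq] at hlam
    obtain ⟨a, ha, b, hb, rfl⟩ := hlam
    rw [Set.mem_singleton_iff] at hb
    subst hb
    have := hspec x hx a ha
    simp only [Complex.sub_re, Complex.ofReal_re]
    linarith
  have hBcont : Continuous fun y : K => Bc y.1 := by
    apply Continuous.sub _ continuous_const
    exact (hA.restrict).matrix_map (continuous_algebraMap ℝ ℂ)
  have hchoice : ∀ y : K, ∃ m : ℕ, 0 < m ∧
      ‖NormedSpace.exp (((-(m : ℝ) : ℝ) : ℂ) • Bc y.1)‖ < 1 := by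
    intro y
    obtain ⟨m, hm, hE⟩ := aux_exists_pow_norm_lt_one hk (NormedSpace.exp (-(Bc y.1)))
      (aux_spectrum_exp_neg _ (hspecB y.1 y.2))
    refine ⟨m, hm, ?_⟩
    have hsm : ((-(m : ℝ) : ℝ) : ℂ) • Bc y.1 = m • (-(Bc y.1)) := by
      push_cast
      rw [neg_smul, ← smul_neg, Nat.cast_smul_eq_nsmul]
    erw [hsm, NormedSpace.exp_nsmul]; exact hE
  choose m hm hmlt using hchoice
  have hcontF : ∀ c : ℝ, Continuous fun z : K =>
      ‖NormedSpace.exp ((c : ℂ) • Bc z.1)‖ := fun c =>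
    ((NormedSpace.exp_continuous).comp (hBcont.const_smul (c : ℂ))).norm
  set U : K → Set K := fun y =>
    {z : K | ‖NormedSpace.exp (((-(m y : ℝ) : ℝ) : ℂ) • Bc z.1)‖ < 1} with hU
  have hUopen : ∀ y, IsOpen (U y) := fun y => isOpen_lt (hcontF _) continuous_const
  obtain ⟨fs, hfs⟩ := isCompact_univ.elim_finite_subcover U hUopen
    (fun z _ => Set.mem_iUnion.mpr ⟨z, hmlt z⟩)
  set M₀ : ℕ := fs.sup m + 1 with hM₀
  obtain ⟨S, hS⟩ := (isCompact_univ.prod (isCompact_Icc (a := (0:ℝ))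
      (b := (M₀ : ℝ)))).exists_bound_of_continuousOn
    (f := fun p : K × ℝ => NormedSpace.exp (((-p.2 : ℝ) : ℂ) • Bc p.1.1))
    (((NormedSpace.exp_continuous).comp
      ((Complex.continuous_ofReal.comp continuous_snd.neg).smul
        (hBcont.comp continuous_fst))).continuousOn)
  set S' : ℝ := max S 1 with hS'
  have main : ∀ z : K, ∀ r : ℝ, 0 ≤ r →
      ‖NormedSpace.exp (((-r : ℝ) : ℂ) • Bc z.1)‖ ≤ S' := by
    intro z
    have hz : z ∈ ⋃ y ∈ fs, U y := hfs (Set.mem_univ z)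
    obtain ⟨y₀, hy₀fs, hy₀⟩ := Set.mem_iUnion₂.mp hz
    have hmz : 0 < m y₀ := hm y₀
    have hz1 : ‖NormedSpace.exp (((-(m y₀ : ℝ) : ℝ) : ℂ) • Bc z.1)‖ < 1 := hy₀
    have hmzM : (m y₀ : ℝ) ≤ (M₀ : ℝ) := by
      exact_mod_cast (Finset.le_sup hy₀fs).trans (Nat.le_succ _)
    have base : ∀ r : ℝ, 0 ≤ r → r ≤ (M₀ : ℝ) →
        ‖NormedSpace.exp (((-r : ℝ) : ℂ) • Bc z.1)‖ ≤ S' := fun r h0 h1 =>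
      (hS (z, r) ⟨Set.mem_univ _, h0, h1⟩).trans (le_max_left S 1)
    have step : ∀ q : ℕ, ∀ r : ℝ, 0 ≤ r → r ≤ (M₀ : ℝ) + q * (m y₀ : ℝ) →
        ‖NormedSpace.exp (((-r : ℝ) : ℂ) • Bc z.1)‖ ≤ S' := by
      intro q
      induction q with
      | zero => intro r h0 h1; exact base r h0 (by simpa using h1)
      | succ q ih =>
        intro r h0 h1
        by_cases hcase : r ≤ (M₀ : ℝ) + q * (m y₀ : ℝ)
        · exact ih r h0 hcase
        push_neg at hcase
        have hq0 : (0:ℝ) ≤ q * (m y₀ : ℝ) := by positivity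
        have hrm : (m y₀ : ℝ) ≤ r := by linarith
        have h0' : 0 ≤ r - (m y₀ : ℝ) := by linarith
        have h1' : r - (m y₀ : ℝ) ≤ (M₀ : ℝ) + q * (m y₀ : ℝ) := by
          push_cast at h1 ⊢
          linarith
        have hsplit : ((-r : ℝ) : ℂ) • Bc z.1 = ((-(m y₀ : ℝ) : ℝ) : ℂ) • Bc z.1
            + ((-(r - (m y₀ : ℝ)) : ℝ) : ℂ) • Bc z.1 := by
          rw [← add_smul]
          congr 1
          push_cast
          ring
        have hcommute : Commute (((-(m y₀ : ℝ) : ℝ) : ℂ) • Bc z.1)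
            (((-(r - (m y₀ : ℝ)) : ℝ) : ℂ) • Bc z.1) :=
          ((Commute.refl (Bc z.1)).smul_left _).smul_right _
        erw [hsplit, NormedSpace.exp_add_of_commute hcommute]
        calc ‖NormedSpace.exp (((-(m y₀ : ℝ) : ℝ) : ℂ) • Bc z.1) *
              NormedSpace.exp (((-(r - (m y₀ : ℝ)) : ℝ) : ℂ) • Bc z.1)‖
            ≤ ‖NormedSpace.exp (((-(m y₀ : ℝ) : ℝ) : ℂ) • Bc z.1)‖ *
              ‖NormedSpace.exp (((-(r - (m y₀ : ℝ)) : ℝ) : ℂ) • Bc z.1)‖ := norm_mul_le _ _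
          _ ≤ 1 * S' := by
              refine mul_le_mul hz1.le (ih _ h0' h1') (norm_nonneg _) zero_le_one
          _ = S' := one_mul _
    intro r h0
    obtain ⟨q, hq⟩ := exists_nat_ge r
    refine step q r h0 ?_
    have h1 : (q : ℝ) ≤ q * (m y₀ : ℝ) := by
      refine le_mul_of_one_le_right (Nat.cast_nonneg _) ?_
      exact_mod_cast hmz
    have hM0 : (0:ℝ) ≤ (M₀ : ℝ) := Nat.cast_nonneg _
    linarith
  refine ⟨S', lt_of_lt_of_le one_pos (le_max_right S 1), 1, one_pos, ?_⟩
  intro x hx t ht ht1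
  have hlog : Real.log t < 0 := Real.log_neg ht ht1
  have htα : (0:ℝ) < t ^ α := Real.rpow_pos_of_pos ht α
  have e1 : ‖NormedSpace.exp (Real.log t • A x)‖
      = ‖NormedSpace.exp ((Real.log t : ℂ) • (A x).map (algebraMap ℝ ℂ))‖ := by
    rw [← aux_norm_map, aux_map_exp]
    congr 2
    ext i j
    simp [Matrix.map_apply, Matrix.smul_apply, smul_eq_mul, Complex.ofReal_mul]
  have e2 : NormedSpace.exp ((Real.log t : ℂ) • (A x).map (algebraMap ℝ ℂ))
      = Complex.exp ((Real.log t : ℂ) * (α : ℂ)) •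
        NormedSpace.exp ((Real.log t : ℂ) • Bc x) := by
    simp only [hBc]
    exact aux_exp_shift _ _ _
  have e3 : ‖Complex.exp ((Real.log t : ℂ) * (α : ℂ))‖ = t ^ α := by
    rw [Complex.norm_exp, ← Complex.ofReal_mul, Complex.ofReal_re,
      Real.rpow_def_of_pos ht]
  have e4 : ((Real.log t : ℝ) : ℂ) = ((-(-Real.log t) : ℝ) : ℂ) := by push_cast; ring
  have hmain := main ⟨x, hx⟩ (-Real.log t) (by linarith)
  rw [e1, e2, norm_smul, e3, e4]
  calc t ^ α * ‖NormedSpace.exp (((-(-Real.log t) : ℝ) : ℂ) • Bc x)‖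
      ≤ t ^ α * S' := by
        refine mul_le_mul_of_nonneg_left ?_ htα.le
        exact hmain
    _ = S' * t ^ α := mul_comm _ _
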